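/- Assume P = Q, let l(x) = (−x)^+, let α_1,…,α_n ≥ 0, and suppose the adapted integrable process (S_k)_{k=1}^n is a.s. non-decreasing (S_1 ≤ S_2 ≤ … ≤ S_n a.s.). Then the infimum of E[M_0] over all P-supermartingales (M_k)_{k=0}^n satisfying E[ (S_k − M_k)^+ ] ≤ α_k for every k ∈ {1,…,n} equals max_{k∈{1,…,n}} { E[S_k] − α_k }. -/

import Mathlib

open MeasureTheory Filter
open scoped MeasureTheory

/-- A supermartingale (under measure `μ`) on the discrete time interval `{a,…,b}`. -/
def IsSupermartingaleOn {Ω : Type*} {m0 : MeasurableSpace Ω}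
    (𝓕 : MeasureTheory.Filtration ℕ m0) (μ : Measure Ω)
    (M : ℕ → Ω → ℝ) (a b : ℕ) : Prop :=
  (∀ k, a ≤ k → k ≤ b → StronglyMeasurable[𝓕 k] (M k)) ∧
  (∀ k, a ≤ k → k ≤ b → Integrable (M k) μ) ∧
  (∀ k, a ≤ k → k < b → (μ[M (k + 1)|𝓕 k]) ≤ᵐ[μ] M k)

set_option linter.unusedVariables false


lemma abs_min_sub_min_le (a x y : ℝ) : |min a x - min a y| ≤ |x - y| := by
  rw [abs_le]
  constructor <;> simp only [min_def] <;> split_ifs <;>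
    rcases abs_cases (x - y) with ⟨h1, h2⟩ | ⟨h1, h2⟩ <;> linarith

lemma sup'_Icc_succ (m : ℕ) (hm : 1 ≤ m) (g : ℕ → ℝ) :
    (Finset.Icc 1 (m+1)).sup' (Finset.nonempty_Icc.mpr (by omega)) g
      = max ((Finset.Icc 1 m).sup' (Finset.nonempty_Icc.mpr hm) g) (g (m+1)) := by
  apply le_antisymm
  · apply Finset.sup'_le
    intro k hk
    simp only [Finset.mem_Icc] at hk
    rcases Nat.lt_or_ge k (m+1) with h | h
    · exact le_max_of_le_left (Finset.le_sup' g (Finset.mem_Icc.mpr ⟨hk.1, by omega⟩))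
    · have hk1 : k = m + 1 := by omega
      subst hk1; exact le_max_right _ _
  · apply max_le
    · apply Finset.sup'_le
      intro k hk
      simp only [Finset.mem_Icc] at hk
      exact Finset.le_sup' g (Finset.mem_Icc.mpr ⟨hk.1, by omega⟩)
    · exact Finset.le_sup' g (Finset.mem_Icc.mpr ⟨by omega, le_refl _⟩)

lemma integrable_min {Ω : Type*} {m0 : MeasurableSpace Ω} {P : Measure Ω} {f g : Ω → ℝ}
    (hf : Integrable f P) (hg : Integrable g P) :
    Integrable (fun ω => min (f ω) (g ω)) P := by
  exact (show (fun ω => min (f ω) (g ω)) = f ⊓ g from rfl) ▸ hf.inf hg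

lemma exists_static {Ω : Type*} {m0 : MeasurableSpace Ω} (P : Measure Ω) [IsProbabilityMeasure P]
    (S : ℕ → Ω → ℝ) (hSint : ∀ k, Integrable (S k) P) (α : ℕ → ℝ) :
    ∀ m, ∀ hm : 1 ≤ m, (∀ k, 1 ≤ k → k ≤ m → 0 ≤ α k) →
    (∀ᵐ ω ∂P, ∀ j k, 1 ≤ j → j ≤ k → k ≤ m → S j ω ≤ S k ω) →
    ∃ f : Ω → ℝ, Integrable f P ∧ (∀ᵐ ω ∂P, f ω ≤ S m ω) ∧
      (∀ k, 1 ≤ k → k ≤ m → ∫ ω, max (S k ω - f ω) 0 ∂P ≤ α k) ∧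
      ∫ ω, f ω ∂P
        = (Finset.Icc 1 m).sup' (Finset.nonempty_Icc.mpr hm) (fun k => (∫ ω, S k ω ∂P) - α k) := by
  intro m hm
  induction m, hm using Nat.le_induction with
  | base =>
    intro hα _
    have hα1 : 0 ≤ α 1 := hα 1 le_rfl le_rfl
    refine ⟨fun ω => S 1 ω - α 1, (hSint 1).sub (integrable_const _), ?_, ?_, ?_⟩
    · filter_upwards with ω; linarith
    · intro k hk1 hk2
      have hk : k = 1 := le_antisymm hk2 hk1
      subst hk
      have : (fun ω => max (S 1 ω - (S 1 ω - α 1)) 0) = fun _ => α 1 := by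
        funext ω; simp [max_eq_left hα1]
      rw [this]
      simp
    · rw [integral_sub (hSint 1) (integrable_const _)]
      simp [Finset.Icc_self]
  | succ m hm IH =>
    intro hα hmono
    obtain ⟨f', hf'int, hf'le, hf'con, hf'eq⟩ :=
      IH (fun k h1 h2 => hα k h1 (h2.trans (Nat.le_succ m)))
        (hmono.mono fun ω h j k h1 h2 h3 => h j k h1 h2 (h3.trans (Nat.le_succ m)))
    set g : ℕ → ℝ := fun k => (∫ ω, S k ω ∂P) - α k with hg
    set c' : ℝ := (Finset.Icc 1 m).sup' (Finset.nonempty_Icc.mpr hm) g with hc'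
    have hαm1 : 0 ≤ α (m+1) := hα (m+1) (by omega) le_rfl
    have hSm_le : ∀ᵐ ω ∂P, S m ω ≤ S (m+1) ω :=
      hmono.mono fun ω h => h m (m+1) hm (Nat.le_succ m) le_rfl
    have hle_ae : ∀ᵐ ω ∂P, f' ω ≤ S (m+1) ω := by
      filter_upwards [hf'le, hSm_le] with ω h1 h2; linarith
    have hsup : (Finset.Icc 1 (m+1)).sup' (Finset.nonempty_Icc.mpr (by omega)) g
        = max c' (g (m+1)) := sup'_Icc_succ m hm g
    by_cases hcase : g (m+1) ≤ c'
    · -- f' still works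
      refine ⟨f', hf'int, hle_ae, ?_, ?_⟩
      · intro k hk1 hk2
        rcases Nat.lt_or_ge k (m+1) with h | h
        · exact hf'con k hk1 (by omega)
        · have hk : k = m + 1 := by omega
          subst hk
          have heq : (fun ω => max (S (m+1) ω - f' ω) 0) =ᵐ[P] fun ω => S (m+1) ω - f' ω := by
            filter_upwards [hle_ae] with ω h1
            exact max_eq_left (by linarith)
          rw [integral_congr_ae heq, integral_sub (hSint (m+1)) hf'int, hf'eq]
          have : g (m+1) ≤ c' := hcase
          simp only [hg] at this
          linarith
      · rw [hf'eq, hsup, max_eq_left hcase]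
    · push_neg at hcase
      by_cases hα0 : ∫ ω, S (m+1) ω ∂P ≤ g (m+1)
      · -- α (m+1) = 0 : take f = S (m+1)
        have hαeq : α (m+1) = 0 := by
          simp only [hg] at hα0; linarith
        refine ⟨S (m+1), hSint (m+1), Eventually.of_forall fun ω => le_rfl, ?_, ?_⟩
        · intro k hk1 hk2
          have hzero : (fun ω => max (S k ω - S (m+1) ω) 0) =ᵐ[P] fun _ => (0:ℝ) := by
            filter_upwards [hmono] with ω h
            exact max_eq_right (by linarith [h k (m+1) hk1 hk2 le_rfl])
          rw [integral_congr_ae hzero]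
          simpa using hα k hk1 hk2
        · rw [hsup, max_eq_right hcase.le]
          simp only [hg, hαeq]; ring
      · push_neg at hα0
        -- IVT construction
        set F : ℝ → Ω → ℝ := fun t ω => min (S (m+1) ω) (f' ω + t) with hF
        have hFint : ∀ t, Integrable (F t) P := fun t =>
          integrable_min (hSint (m+1)) (hf'int.add (integrable_const t))
        set H : ℝ → ℝ := fun t => ∫ ω, F t ω ∂P with hH
        have hH0 : H 0 = c' := by
          have : F 0 =ᵐ[P] f' := by
            filter_upwards [hle_ae] with ω h1
            simp only [hF, add_zero]
            exact min_eq_right h1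
          rw [hH]; simp only
          rw [integral_congr_ae this, hf'eq]
        have hHcont : Continuous H := by
          have : LipschitzWith 1 H := by
            apply LipschitzWith.of_dist_le_mul
            intro t s
            rw [Real.dist_eq, Real.dist_eq, NNReal.coe_one, one_mul, hH]
            simp only
            rw [← integral_sub (hFint t) (hFint s)]
            calc |∫ ω, (F t ω - F s ω) ∂P| ≤ ∫ ω, |F t ω - F s ω| ∂P := by
                  simpa [Real.norm_eq_abs] using
                    norm_integral_le_integral_norm (fun ω => F t ω - F s ω) (μ := P)
              _ ≤ ∫ _ω, |t - s| ∂P := by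
                  apply integral_mono ((hFint t).sub (hFint s)).abs (integrable_const _)
                  intro ω
                  simpa [hF] using abs_min_sub_min_le (S (m+1) ω) (f' ω + t) (f' ω + s)
              _ = |t - s| := by simp
          exact this.continuous
        have htend : Tendsto (fun j : ℕ => H j) atTop (nhds (∫ ω, S (m+1) ω ∂P)) := by
          apply tendsto_integral_of_dominated_convergence
            (fun ω => |S (m+1) ω| + |f' ω|)
            (fun j => (hFint j).aestronglyMeasurable)
            ((hSint (m+1)).abs.add hf'int.abs)
          · intro j
            filter_upwards with ω
            rw [Real.norm_eq_abs, abs_le]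
            constructor
            · have h1 : -|S (m+1) ω| ≤ S (m+1) ω := neg_abs_le _
              have h2 : -|f' ω| ≤ f' ω := neg_abs_le _
              have h3 : (0:ℝ) ≤ j := Nat.cast_nonneg j
              have h4 : |f' ω| ≥ 0 := abs_nonneg _
              have h5 : |S (m+1) ω| ≥ 0 := abs_nonneg _
              exact le_min (by linarith) (by linarith)
            · have := min_le_left (S (m+1) ω) (f' ω + (j:ℝ))
              have := le_abs_self (S (m+1) ω)
              have h4 : |f' ω| ≥ 0 := abs_nonneg _
              simp only [hF]
              linarith
          · filter_upwards with ω
            apply Tendsto.congr' (f₁ := fun _ : ℕ => S (m+1) ω)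
            · filter_upwards [eventually_ge_atTop ⌈S (m+1) ω - f' ω⌉₊] with j hj
              have : S (m+1) ω - f' ω ≤ (j:ℝ) :=
                le_trans (Nat.le_ceil _) (by exact_mod_cast Nat.cast_le.mpr hj)
              simp only [hF]
              exact (min_eq_left (by linarith)).symm
            · exact tendsto_const_nhds
        obtain ⟨j, hj⟩ := (htend.eventually (lt_mem_nhds hα0)).exists
        have hj0 : (0:ℝ) ≤ (j:ℝ) := Nat.cast_nonneg j
        have hmem : g (m+1) ∈ Set.Icc (H 0) (H (j:ℝ)) := ⟨by rw [hH0]; exact hcase.le, hj.le⟩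
        obtain ⟨t, ht_mem, htH⟩ := intermediate_value_Icc hj0 hHcont.continuousOn hmem
        have ht0 : 0 ≤ t := ht_mem.1
        have hff' : ∀ᵐ ω ∂P, f' ω ≤ F t ω := by
          filter_upwards [hle_ae] with ω h1
          exact le_min h1 (by linarith)
        refine ⟨F t, hFint t, Eventually.of_forall fun ω => min_le_left _ _, ?_, ?_⟩
        · intro k hk1 hk2
          rcases Nat.lt_or_ge k (m+1) with h | h
          · calc ∫ ω, max (S k ω - F t ω) 0 ∂P
                ≤ ∫ ω, max (S k ω - f' ω) 0 ∂P := by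
                  apply integral_mono_ae ((hSint k).sub (hFint t)).pos_part
                    ((hSint k).sub hf'int).pos_part
                  filter_upwards [hff'] with ω h1
                  exact max_le_max (by simp only [Pi.sub_apply]; linarith) le_rfl
              _ ≤ α k := hf'con k hk1 (by omega)
          · have hk : k = m + 1 := by omega
            subst hk
            have heq : (fun ω => max (S (m+1) ω - F t ω) 0) =ᵐ[P]
                fun ω => S (m+1) ω - F t ω := by
              filter_upwards with ω
              exact max_eq_left (by linarith [min_le_left (S (m+1) ω) (f' ω + t)])
            rw [integral_congr_ae heq, integral_sub (hSint (m+1)) (hFint t)]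
            have : H t = g (m+1) := htH
            simp only [hH] at this
            rw [this]
            simp only [hg]
            linarith
        · rw [hsup, max_eq_right hcase.le]
          exact htH

theorem stmt_14
    {Ω : Type*} {m0 : MeasurableSpace Ω} (P : Measure Ω) [IsProbabilityMeasure P]
    (𝓕 : Filtration ℕ m0) (n : ℕ) (hn : 1 ≤ n)
    (htriv : ∀ s : Set Ω, MeasurableSet[𝓕 0] s → P s = 0 ∨ P s = 1)
    (S : ℕ → Ω → ℝ) (hS : Adapted 𝓕 S) (hSint : ∀ k, Integrable (S k) P)
    (hSmono : ∀ᵐ ω ∂P, ∀ j k, 1 ≤ j → j ≤ k → k ≤ n → S j ω ≤ S k ω)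
    (α : ℕ → ℝ) (hα : ∀ k, 1 ≤ k → k ≤ n → 0 ≤ α k) :
    sInf {x : ℝ | ∃ M : ℕ → Ω → ℝ, IsSupermartingaleOn 𝓕 P M 0 n ∧
        (∀ k, 1 ≤ k → k ≤ n → (∫ ω, max (S k ω - M k ω) 0 ∂P) ≤ α k) ∧
        x = ∫ ω, M 0 ω ∂P}
      = (Finset.Icc 1 n).sup' (Finset.nonempty_Icc.mpr hn)
          (fun k => (∫ ω, S k ω ∂P) - α k) := by
  set c : ℝ := (Finset.Icc 1 n).sup' (Finset.nonempty_Icc.mpr hn)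
      (fun k => (∫ ω, S k ω ∂P) - α k) with hc
  set A : Set ℝ := {x : ℝ | ∃ M : ℕ → Ω → ℝ, IsSupermartingaleOn 𝓕 P M 0 n ∧
        (∀ k, 1 ≤ k → k ≤ n → (∫ ω, max (S k ω - M k ω) 0 ∂P) ≤ α k) ∧
        x = ∫ ω, M 0 ω ∂P} with hA
  -- membership: the optimal supermartingale
  obtain ⟨f, hfint, _, hfcon, hfeq⟩ := exists_static P S hSint α n hn hα hSmono
  have hcA : c ∈ A := by
    refine ⟨fun k => P[f|𝓕 k], ⟨?_, ?_, ?_⟩, ?_, ?_⟩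
    · intro k _ _; exact stronglyMeasurable_condExp
    · intro k _ _; exact integrable_condExp
    · intro k _ _
      exact (condExp_condExp_of_le (𝓕.mono (Nat.le_succ k)) (𝓕.le (k+1))).le
    · intro k hk1 hk2
      have hSk : P[S k|𝓕 k] = S k :=
        condExp_of_stronglyMeasurable (𝓕.le k) (hS k).stronglyMeasurable (hSint k)
      have e1 : P[fun ω => S k ω - f ω|𝓕 k] =ᵐ[P] fun ω => S k ω - (P[f|𝓕 k]) ω := by
        have := condExp_sub (μ := P) (m := 𝓕 k) (hSint k) hfint
        filter_upwards [this] with ω hω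
        simp only [Pi.sub_apply] at hω ⊢
        rw [show (S k - f) = (fun ω => S k ω - f ω) from rfl] at hω
        rw [hω, hSk]
      have e2 : P[fun ω => S k ω - f ω|𝓕 k] ≤ᵐ[P] P[fun ω => max (S k ω - f ω) 0|𝓕 k] :=
        condExp_mono ((hSint k).sub hfint) ((hSint k).sub hfint).pos_part
          (Eventually.of_forall fun ω => le_max_left _ _)
      have e3 : (0:Ω → ℝ) ≤ᵐ[P] P[fun ω => max (S k ω - f ω) 0|𝓕 k] :=
        condExp_nonneg (Eventually.of_forall fun ω => le_max_right _ _)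
      have key : ∀ᵐ ω ∂P, max (S k ω - (P[f|𝓕 k]) ω) 0
          ≤ (P[fun ω => max (S k ω - f ω) 0|𝓕 k]) ω := by
        filter_upwards [e1, e2, e3] with ω h1 h2 h3
        exact max_le (by rw [← h1]; exact h2) h3
      calc ∫ ω, max (S k ω - (P[f|𝓕 k]) ω) 0 ∂P
          ≤ ∫ ω, (P[fun ω => max (S k ω - f ω) 0|𝓕 k]) ω ∂P :=
            integral_mono_ae ((hSint k).sub integrable_condExp).pos_part
              integrable_condExp key
        _ = ∫ ω, max (S k ω - f ω) 0 ∂P := integral_condExp (𝓕.le k)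
        _ ≤ α k := hfcon k hk1 hk2
    · rw [integral_condExp (𝓕.le 0), hfeq]
  -- lower bound
  have hlb : ∀ x ∈ A, c ≤ x := by
    rintro x ⟨M, ⟨hMmeas, hMint, hMsuper⟩, hMcon, rfl⟩
    have hmono : ∀ k, k ≤ n → ∫ ω, M k ω ∂P ≤ ∫ ω, M 0 ω ∂P := by
      intro k
      induction k with
      | zero => intro _; exact le_rfl
      | succ k IH =>
        intro hk
        have h1 : ∫ ω, M (k+1) ω ∂P = ∫ ω, (P[M (k+1)|𝓕 k]) ω ∂P :=
          (integral_condExp (𝓕.le k)).symm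
        have h2 : ∫ ω, (P[M (k+1)|𝓕 k]) ω ∂P ≤ ∫ ω, M k ω ∂P :=
          integral_mono_ae integrable_condExp (hMint k (Nat.zero_le k) (by omega))
            (hMsuper k (Nat.zero_le k) (by omega))
        exact h1 ▸ (h2.trans (IH (by omega)))
    apply Finset.sup'_le
    intro k hk
    simp only [Finset.mem_Icc] at hk
    have hMkint : Integrable (M k) P := hMint k (Nat.zero_le k) hk.2
    have h3 : ∫ ω, (S k ω - M k ω) ∂P ≤ ∫ ω, max (S k ω - M k ω) 0 ∂P :=
      integral_mono ((hSint k).sub hMkint) ((hSint k).sub hMkint).pos_part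
        (fun ω => le_max_left _ _)
    rw [integral_sub (hSint k) hMkint] at h3
    have h4 := hMcon k hk.1 hk.2
    have h5 := hmono k hk.2
    linarith
  exact le_antisymm (csInf_le ⟨c, hlb⟩ hcA) (le_csInf ⟨c, hcA⟩ hlb)
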